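/- arXiv:1511.00084 — 5 statements merged into one kernel-verified Lean document; each statement's English description precedes it below -/
import Mathlib

section
/- With notation as above, setting c₀(j) = ((1-k)j - 1)[j-1], for 1 ≤ i, j ≤ s the identity (ki - i - 1)[j-1] · (i+s)[s-j] = Σ_{t=1}^{j} (i+s)[s-t] · c_{j-t}(j) holds, i.e. the matrix M'' = ((ki-i-1)[j-1]·(i+s)[s-j])_{1≤i,j≤s} factors as M'' = M₁·M₂ where M₁ = ((i+s)[s-t])_{1≤i,t≤s} and M₂ = (c_{j-t}(j))_{1≤t,j≤s}. -/
open Polynomial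

private theorem stmt_6_key (k s : ℕ) (c : ℕ → ℕ → ℚ)
    (hexp : ∀ j : ℕ, 1 ≤ j → j ≤ s →
      (descPochhammer ℚ (j - 1)).comp (C ((k : ℚ) - 1) * X - 1) =
        ∑ t ∈ Finset.range j, C (c t j) * (descPochhammer ℚ t).comp (X + C (j : ℚ)))
    (i j : ℕ) (hj1 : 1 ≤ j) (hj2 : j ≤ s) :
      (descPochhammer ℚ (j - 1)).eval ((k : ℚ) * i - i - 1) *
          (descPochhammer ℚ (s - j)).eval ((i : ℚ) + s) =
        ∑ t ∈ Finset.Icc 1 j,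
          (descPochhammer ℚ (s - t)).eval ((i : ℚ) + s) * c (j - t) j := by
  have h := congrArg (fun p => p.eval (i : ℚ)) (hexp j hj1 hj2)
  simp only [eval_comp, eval_sub, eval_mul, eval_one, eval_C, eval_X, eval_finset_sum,
    eval_add] at h
  have hL : ((k : ℚ) - 1) * i - 1 = (k : ℚ) * i - i - 1 := by ring
  rw [hL] at h
  calc (descPochhammer ℚ (j - 1)).eval ((k : ℚ) * i - i - 1) *
          (descPochhammer ℚ (s - j)).eval ((i : ℚ) + s)
      = ∑ t ∈ Finset.range j, (descPochhammer ℚ (s - j)).eval ((i : ℚ) + s) *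
          ((descPochhammer ℚ t).eval ((i : ℚ) + j)) * c t j := by
        rw [h, Finset.sum_mul]
        refine Finset.sum_congr rfl fun t _ => by ring
    _ = ∑ t ∈ Finset.range j, (descPochhammer ℚ (s - j + t)).eval ((i : ℚ) + s) * c t j := by
        refine Finset.sum_congr rfl fun t _ => ?_
        congr 1
        have := congrArg (fun p => p.eval ((i : ℚ) + s)) (descPochhammer_mul (R := ℚ) (s - j) t)
        simp only [eval_mul, eval_comp, eval_sub, eval_X, eval_natCast] at this
        rw [← this]
        congr 1
        rw [Nat.cast_sub hj2]
        ring
    _ = ∑ t ∈ Finset.Icc 1 j, (descPochhammer ℚ (s - t)).eval ((i : ℚ) + s) * c (j - t) j := by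
        refine Finset.sum_nbij' (fun t => j - t) (fun t => j - t) ?_ ?_ ?_ ?_ ?_
        · intro a ha; simp at ha ⊢; omega
        · intro a ha; simp at ha ⊢; omega
        · intro a ha; simp at ha ⊢; omega
        · intro a ha; simp at ha ⊢; omega
        · intro a ha; simp at ha
          have h1 : s - (j - a) = s - j + a := by omega
          have h2 : j - (j - a) = a := by omega
          rw [h1, h2]

/-- With `c t j` the coefficients of `((k-1)x-1)[j-1]` in the basis `{(x+j)[t]}`,
the identity `(ki-i-1)[j-1]·(i+s)[s-j] = Σ_{t=1}^{j} (i+s)[s-t]·c_{j-t}(j)` holds,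
i.e. `M'' = M₁ · M₂`. -/
theorem stmt_6 (k s : ℕ) (hk : 1 ≤ k) (hs : 1 ≤ s) (c : ℕ → ℕ → ℚ)
    (hexp : ∀ j : ℕ, 1 ≤ j → j ≤ s →
      (descPochhammer ℚ (j - 1)).comp (C ((k : ℚ) - 1) * X - 1) =
        ∑ t ∈ Finset.range j, C (c t j) * (descPochhammer ℚ t).comp (X + C (j : ℚ))) :
    (∀ i j : ℕ, 1 ≤ i → i ≤ s → 1 ≤ j → j ≤ s →
      (descPochhammer ℚ (j - 1)).eval ((k : ℚ) * i - i - 1) *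
          (descPochhammer ℚ (s - j)).eval ((i : ℚ) + s) =
        ∑ t ∈ Finset.Icc 1 j,
          (descPochhammer ℚ (s - t)).eval ((i : ℚ) + s) * c (j - t) j) ∧
    (Matrix.of fun i j : Fin s =>
        (descPochhammer ℚ ((j : ℕ) + 1 - 1)).eval ((k : ℚ) * ((i : ℕ) + 1) - ((i : ℕ) + 1) - 1) *
          (descPochhammer ℚ (s - ((j : ℕ) + 1))).eval (((i : ℕ) + 1 : ℚ) + s)) =
      (Matrix.of fun i t : Fin s =>
          (descPochhammer ℚ (s - ((t : ℕ) + 1))).eval (((i : ℕ) + 1 : ℚ) + s)) *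
        (Matrix.of fun t j : Fin s =>
          if (t : ℕ) ≤ (j : ℕ) then c ((j : ℕ) - (t : ℕ)) ((j : ℕ) + 1) else 0) := by
  refine ⟨fun i j _ _ hj1 hj2 => stmt_6_key k s c hexp i j hj1 hj2, ?_⟩
  ext i j
  rw [Matrix.mul_apply]
  simp only [Matrix.of_apply]
  have hkey := stmt_6_key k s c hexp ((i : ℕ) + 1) ((j : ℕ) + 1) (by omega) (by omega)
  push_cast at hkey ⊢
  rw [hkey, Fin.sum_univ_eq_sum_range
    (fun t => eval ((i : ℚ) + 1 + s) (descPochhammer ℚ (s - (t + 1))) *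
      if t ≤ (j : ℕ) then c ((j : ℕ) - t) ((j : ℕ) + 1) else 0)]
  rw [← Finset.sum_subset (Finset.range_subset_range.2 (show (j : ℕ) + 1 ≤ s by omega))
    (fun x _ hx => by
      simp only [Finset.mem_range, not_lt] at hx
      rw [if_neg (by omega), mul_zero])]
  refine Finset.sum_nbij' (fun t => t - 1) (fun t => t + 1) ?_ ?_ ?_ ?_ ?_
  · intro a ha; simp at ha ⊢; omega
  · intro a ha; simp at ha ⊢; omega
  · intro a ha; simp at ha ⊢; omega
  · intro a ha; simp at ha ⊢
  · intro a ha
    simp only [Finset.mem_Icc] at ha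
    have h1 : a - 1 + 1 = a := by omega
    have h2 : (j : ℕ) - (a - 1) = (j : ℕ) + 1 - a := by omega
    rw [if_pos (by omega), h1, h2]
end

section
/- Let γ ∈ ℚ_p(μ_p) be a root of the Artin–Hasse exponential E(t) = exp(Σ_{m≥0} t^{p^m}/p^m) with v(γ) = 1/(p-1), and write θ(t) = E(γt) = Σ_{m≥0} γ_m t^m. Then v(γ_m) ≥ m/(p-1) for all m ≥ 0, and γ_m = γ^m/m! for 0 ≤ m ≤ p - 1. -/
open PowerSeries Finset

section DworkAux

variable {p : ℕ} [Fact p.Prime]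

private lemma my_norm_sum_le {ι : Type*} (t : Finset ι) (f : ι → ℚ_[p]) {c : ℝ} (hc : 0 ≤ c)
    (h : ∀ i ∈ t, ‖f i‖ ≤ c) : ‖∑ i ∈ t, f i‖ ≤ c := by
  rcases t.eq_empty_or_nonempty with rfl | ht
  · simpa using hc
  · have : Nonempty ι := ⟨ht.choose⟩
    obtain ⟨i, hi, hle⟩ := IsUltrametricDist.exists_norm_finset_sum_le t f
    exact hle.trans (h i (hi ht))

private lemma digits_sum_pos {j : ℕ} (hj : j ≠ 0) : 1 ≤ (p.digits j).sum := by
  by_contra h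
  push_neg at h
  have hs : (p.digits j).sum = 0 := by omega
  have : ∀ x ∈ p.digits j, x = 0 := by
    intro x hx
    exact Nat.eq_zero_of_le_zero (hs ▸ List.single_le_sum (fun _ _ => Nat.zero_le _) x hx)
  have h0 : Nat.ofDigits p (p.digits j) = 0 := by
    rw [Nat.ofDigits_eq_sum_mapIdx]
    apply List.sum_eq_zero
    intro x hx
    simp only [List.mem_mapIdx] at hx
    obtain ⟨i, hi, rfl⟩ := hx
    rw [this _ (List.getElem_mem hi), zero_mul]
  rw [Nat.ofDigits_digits] at h0
  exact hj h0

private lemma val_factorial_lt {j : ℕ} (hj : j ≠ 0) : padicValNat p (Nat.factorial j) < j := by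
  have h := sub_one_mul_padicValNat_factorial (p := p) j
  have hp2 : 2 ≤ p := (Fact.out : p.Prime).two_le
  have hs := digits_sum_pos (p := p) hj
  have : padicValNat p (Nat.factorial j) ≤ (p - 1) * padicValNat p (Nat.factorial j) :=
    Nat.le_mul_of_pos_left _ (by omega)
  omega

private lemma norm_p_pow_div_factorial {j : ℕ} (hj : j ≠ 0) :
    ‖(p : ℚ_[p]) ^ j * ((Nat.factorial j : ℕ) : ℚ_[p])⁻¹‖ ≤ (p : ℝ)⁻¹ := by
  have hp1 : (1 : ℝ) < p := by exact_mod_cast (Fact.out : p.Prime).one_lt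
  have hfne : ((Nat.factorial j : ℕ) : ℚ_[p]) ≠ 0 :=
    Nat.cast_ne_zero.mpr (Nat.factorial_ne_zero j)
  have hnf : ‖((Nat.factorial j : ℕ) : ℚ_[p])‖ = (p : ℝ) ^ (-(padicValNat p (Nat.factorial j) : ℤ)) := by
    rw [Padic.norm_eq_zpow_neg_valuation hfne, Padic.valuation_natCast]
  have hv := val_factorial_lt (p := p) hj
  rw [norm_mul, norm_inv, norm_pow, Padic.norm_p, hnf]
  rw [← zpow_natCast ((p : ℝ)⁻¹) j, ← zpow_neg_one (p : ℝ), ← zpow_mul, ← zpow_neg,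
    ← zpow_add₀ (by positivity : (p:ℝ) ≠ 0)]
  calc (p : ℝ) ^ (-1 * (j : ℤ) + -(-(padicValNat p (Nat.factorial j) : ℤ)))
      ≤ (p:ℝ) ^ (-1 : ℤ) := by
        apply zpow_le_zpow_right₀ hp1.le
        omega


/-- indicator of `i+1` being a power of `p` -/
private noncomputable def dd (p : ℕ) [Fact p.Prime] (i : ℕ) : ℚ_[p] :=
  if p ^ (Nat.log p (i + 1)) = i + 1 then 1 else 0

private lemma sum_dd (F : ℕ → ℚ_[p]) (n : ℕ) :
    ∑ ij ∈ Finset.HasAntidiagonal.antidiagonal n, dd p ij.1 * F ij.2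
      = ∑ k ∈ Finset.range (n + 2), if p ^ k ≤ n + 1 then F (n + 1 - p ^ k) else 0 := by
  have hp1 : 1 < p := (Fact.out : p.Prime).one_lt
  rw [Finset.Nat.sum_antidiagonal_eq_sum_range_succ_mk]
  have l : ∀ i ∈ Finset.range (n + 1), dd p i * F (n - i)
      = if p ^ (Nat.log p (i + 1)) = i + 1 then F (n - i) else 0 := by
    intro i _
    simp [dd, ite_mul]
  rw [Finset.sum_congr rfl l, ← Finset.sum_filter, ← Finset.sum_filter]
  apply Finset.sum_nbij' (i := fun i => Nat.log p (i + 1)) (j := fun k => p ^ k - 1)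
  · intro a ha
    simp only [Finset.mem_filter, Finset.mem_range] at ha ⊢
    constructor
    · have := Nat.log_le_self p (a + 1); omega
    · rw [ha.2]; omega
  · intro k hk
    simp only [Finset.mem_filter, Finset.mem_range] at hk ⊢
    have h1 : 1 ≤ p ^ k := Nat.one_le_pow _ _ (by omega)
    constructor
    · omega
    · rw [Nat.sub_add_cancel h1, Nat.log_pow hp1]
  · intro a ha
    simp only [Finset.mem_filter, Finset.mem_range] at ha
    omega
  · intro k hk
    simp only [Finset.mem_filter, Finset.mem_range] at hk
    have h1 : 1 ≤ p ^ k := Nat.one_le_pow _ _ (by omega)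
    rw [Nat.sub_add_cancel h1, Nat.log_pow hp1]
  · intro a ha
    simp only [Finset.mem_filter, Finset.mem_range] at ha
    congr 1
    omega



section Main

variable {S E : PowerSeries ℚ_[p]}
variable (hS : ∀ n : ℕ, (coeff (R := ℚ_[p]) n) S =
    if n ≠ 0 ∧ p ^ (Nat.log p n) = n then ((p : ℚ_[p]) ^ (Nat.log p n))⁻¹ else 0)
variable (hE : ∀ m : ℕ, (coeff (R := ℚ_[p]) m) E =
      ∑ n ∈ Finset.range (m + 1), (coeff (R := ℚ_[p]) m) (S ^ n) / (Nat.factorial n : ℚ_[p]))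

private lemma hS0 (hS : ∀ n : ℕ, (coeff (R := ℚ_[p]) n) S =
    if n ≠ 0 ∧ p ^ (Nat.log p n) = n then ((p : ℚ_[p]) ^ (Nat.log p n))⁻¹ else 0) :
    constantCoeff (R := ℚ_[p]) S = 0 := by
  rw [← coeff_zero_eq_constantCoeff_apply, hS]
  simp

private lemma coeff_dS (hS : ∀ n : ℕ, (coeff (R := ℚ_[p]) n) S =
    if n ≠ 0 ∧ p ^ (Nat.log p n) = n then ((p : ℚ_[p]) ^ (Nat.log p n))⁻¹ else 0) (i : ℕ) :
    coeff (R := ℚ_[p]) i (d⁄dX ℚ_[p] S) = dd p i := by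
  rw [coeff_derivative, hS, dd]
  by_cases h : p ^ (Nat.log p (i + 1)) = i + 1
  · rw [if_pos ⟨by omega, h⟩, if_pos h]
    have : ((i : ℚ_[p]) + 1) = ((p : ℚ_[p]) ^ (Nat.log p (i + 1))) := by
      have h2 : (((i + 1 : ℕ)) : ℚ_[p]) = (((p ^ (Nat.log p (i + 1)) : ℕ)) : ℚ_[p]) := by
        rw [h]
      push_cast at h2
      linear_combination h2
    rw [this, inv_mul_cancel₀
      (pow_ne_zero _ (Nat.cast_ne_zero.mpr (Fact.out : p.Prime).ne_zero))]
  · rw [if_neg (by tauto), if_neg h, zero_mul]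

private lemma coeff_pow_S_zero (hS0 : constantCoeff (R := ℚ_[p]) S = 0) {k n : ℕ} (h : n < k) :
    coeff (R := ℚ_[p]) n (S ^ k) = 0 := by
  have hd : (X : ℚ_[p]⟦X⟧) ^ k ∣ S ^ k := pow_dvd_pow_of_dvd (X_dvd_iff.mpr hS0) k
  exact X_pow_dvd_iff.mp hd n h

private noncomputable def PS (S : PowerSeries ℚ_[p]) (N : ℕ) : PowerSeries ℚ_[p] :=
  ∑ k ∈ Finset.range N, ((Nat.factorial k : ℚ_[p]))⁻¹ • S ^ k

private lemma coeff_PS_eq (hS0 : constantCoeff (R := ℚ_[p]) S = 0)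
    (hE : ∀ m : ℕ, (coeff (R := ℚ_[p]) m) E =
      ∑ n ∈ Finset.range (m + 1), (coeff (R := ℚ_[p]) m) (S ^ n) / (Nat.factorial n : ℚ_[p]))
    {m N : ℕ} (h : m < N) : coeff (R := ℚ_[p]) m (PS S N) = coeff (R := ℚ_[p]) m E := by
  rw [PS, map_sum]
  rw [← Finset.sum_range_add_sum_Ico _ (by omega : m + 1 ≤ N)]
  have h2 : ∀ k ∈ Finset.Ico (m + 1) N, coeff (R := ℚ_[p]) m ((Nat.factorial k : ℚ_[p])⁻¹ • S ^ k) = 0 := by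
    intro k hk
    rw [Finset.mem_Ico] at hk
    rw [map_smul, coeff_pow_S_zero hS0 (by omega), smul_zero]
  rw [Finset.sum_eq_zero h2, add_zero, hE]
  apply Finset.sum_congr rfl
  intro k _
  rw [map_smul, smul_eq_mul, div_eq_mul_inv, mul_comm]

private lemma deriv_PS (S : PowerSeries ℚ_[p]) (N : ℕ) :
    d⁄dX ℚ_[p] (PS S (N + 1)) = (d⁄dX ℚ_[p] S) * PS S N := by
  rw [PS, map_sum, Finset.sum_range_succ']
  have h0 : d⁄dX ℚ_[p] ((Nat.factorial 0 : ℚ_[p])⁻¹ • S ^ 0) = 0 := by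
    simp
  rw [h0, add_zero]
  rw [PS, Finset.mul_sum]
  apply Finset.sum_congr rfl
  intro k _
  have hk1 : ((k + 1 : ℕ) : ℚ_[p]) ≠ 0 := Nat.cast_ne_zero.mpr (Nat.succ_ne_zero k)
  have hkf : ((Nat.factorial k : ℚ_[p])) ≠ 0 := Nat.cast_ne_zero.mpr (Nat.factorial_ne_zero k)
  have key : ((Nat.factorial (k + 1) : ℚ_[p]))⁻¹ * ((k + 1 : ℕ) : ℚ_[p])
      = ((Nat.factorial k : ℚ_[p]))⁻¹ := by
    rw [Nat.factorial_succ]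
    push_cast
    push_cast at hk1
    field_simp
  rw [Derivation.map_smul, Derivation.leibniz_pow, Nat.add_sub_cancel]
  rw [← Nat.cast_smul_eq_nsmul ℚ_[p] (k + 1), smul_smul, key]
  rw [smul_eq_mul, mul_smul_comm]
  exact congrArg _ (mul_comm _ _)



private noncomputable def AA (p : ℕ) [Fact p.Prime] (E : PowerSeries ℚ_[p]) : PowerSeries ℚ_[p] :=
  PowerSeries.mk fun n => if p ∣ n then coeff (R := ℚ_[p]) (n / p) E else 0

private noncomputable def BB (p : ℕ) [Fact p.Prime] : PowerSeries ℚ_[p] :=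
  PowerSeries.mk fun n => (p : ℚ_[p]) ^ n * ((Nat.factorial n : ℚ_[p]))⁻¹

private lemma fact_succ_inv (k : ℕ) : ((Nat.factorial (k + 1) : ℚ_[p]))⁻¹ * ((k + 1 : ℕ) : ℚ_[p])
      = ((Nat.factorial k : ℚ_[p]))⁻¹ := by
  have hk1 : ((k + 1 : ℕ) : ℚ_[p]) ≠ 0 := Nat.cast_ne_zero.mpr (Nat.succ_ne_zero k)
  have hkf : ((Nat.factorial k : ℚ_[p])) ≠ 0 := Nat.cast_ne_zero.mpr (Nat.factorial_ne_zero k)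
  rw [Nat.factorial_succ]
  push_cast
  push_cast at hk1
  field_simp

private lemma ode_unique (H F G : PowerSeries ℚ_[p]) (hF : d⁄dX ℚ_[p] F = H * F)
    (hG : d⁄dX ℚ_[p] G = H * G) (h0 : constantCoeff (R := ℚ_[p]) F = constantCoeff (R := ℚ_[p]) G) : F = G := by
  ext n
  induction n using Nat.strong_induction_on with
  | _ n ih =>
    match n with
    | 0 => simpa [coeff_zero_eq_constantCoeff_apply] using h0
    | Nat.succ n =>
      have h1 := congrArg (coeff (R := ℚ_[p]) n) hF
      have h2 := congrArg (coeff (R := ℚ_[p]) n) hG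
      rw [coeff_derivative] at h1 h2
      have hHF : coeff (R := ℚ_[p]) n (H * F) = coeff (R := ℚ_[p]) n (H * G) := by
        rw [coeff_mul, coeff_mul]
        apply Finset.sum_congr rfl
        intro ij hij
        rw [Finset.HasAntidiagonal.mem_antidiagonal] at hij
        rw [ih ij.2 (by omega)]
      have := h1.trans (hHF.trans h2.symm)
      have hne : ((n : ℚ_[p]) + 1) ≠ 0 := by
        have : (((n + 1 : ℕ)) : ℚ_[p]) ≠ 0 := Nat.cast_ne_zero.mpr (Nat.succ_ne_zero n)
        push_cast at this
        exact this
      exact mul_right_cancel₀ hne this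

private lemma ode_B : d⁄dX ℚ_[p] (BB p) = C (R := ℚ_[p]) (p : ℚ_[p]) * BB p := by
  ext n
  rw [coeff_derivative, coeff_C_mul, BB, coeff_mk, coeff_mk]
  have := fact_succ_inv (p := p) n
  push_cast
  push_cast at this
  rw [mul_assoc, this, pow_succ]
  ring



include hS hE

private lemma deriv_E : d⁄dX ℚ_[p] E = (d⁄dX ℚ_[p] S) * E := by
  have h0 := hS0 hS
  ext n
  rw [coeff_derivative, ← coeff_PS_eq h0 hE (by omega : n + 1 < n + 2), ← coeff_derivative,
    deriv_PS, coeff_mul, coeff_mul]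
  apply Finset.sum_congr rfl
  intro ij hij
  rw [Finset.HasAntidiagonal.mem_antidiagonal] at hij
  rw [coeff_PS_eq h0 hE (by omega : ij.2 < n + 1)]

/-- the scalar recursion -/
private lemma rec_E (n : ℕ) :
    ((n + 1 : ℕ) : ℚ_[p]) * coeff (R := ℚ_[p]) (n + 1) E
      = ∑ k ∈ Finset.range (n + 2), if p ^ k ≤ n + 1 then coeff (R := ℚ_[p]) (n + 1 - p ^ k) E else 0 := by
  have h := congrArg (coeff (R := ℚ_[p]) n) (deriv_E hS hE)
  rw [coeff_derivative, coeff_mul] at h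
  rw [← sum_dd (fun j => coeff (R := ℚ_[p]) j E) n]
  push_cast
  rw [mul_comm, h]
  apply Finset.sum_congr rfl
  intro ij _
  rw [coeff_dS hS]



private lemma ode_A : d⁄dX ℚ_[p] (AA p E)
    = (C (R := ℚ_[p]) (p : ℚ_[p]) * d⁄dX ℚ_[p] S - C (R := ℚ_[p]) (p : ℚ_[p])) * AA p E := by
  have hp2 : 2 ≤ p := (Fact.out : p.Prime).two_le
  ext n
  rw [coeff_derivative, coeff_mul]
  -- compute the RHS sum
  have hco : ∀ ij : ℕ × ℕ, ij ∈ Finset.HasAntidiagonal.antidiagonal n →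
      coeff (R := ℚ_[p]) ij.1 (C (R := ℚ_[p]) (p : ℚ_[p]) * d⁄dX ℚ_[p] S - C (R := ℚ_[p]) (p : ℚ_[p]))
        * coeff (R := ℚ_[p]) ij.2 (AA p E)
      = (p : ℚ_[p]) * (dd p ij.1 * coeff (R := ℚ_[p]) ij.2 (AA p E))
        - (if ij.1 = 0 then (p : ℚ_[p]) * coeff (R := ℚ_[p]) ij.2 (AA p E) else 0) := by
    intro ij _
    rw [map_sub, coeff_C_mul, coeff_dS hS, coeff_C]
    split_ifs <;> ring
  rw [Finset.sum_congr rfl hco, Finset.sum_sub_distrib, ← Finset.mul_sum,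
    sum_dd (fun j => coeff (R := ℚ_[p]) j (AA p E)) n]
  have hsingle : ∑ ij ∈ Finset.HasAntidiagonal.antidiagonal n,
      (if ij.1 = 0 then (p : ℚ_[p]) * coeff (R := ℚ_[p]) ij.2 (AA p E) else 0)
      = (p : ℚ_[p]) * coeff (R := ℚ_[p]) n (AA p E) := by
    rw [Finset.sum_eq_single (0, n)]
    · simp
    · intro ij hij hne
      rw [Finset.HasAntidiagonal.mem_antidiagonal] at hij
      rw [if_neg]
      intro h0
      apply hne
      have h2 : ij.2 = n := by omega
      exact Prod.ext_iff.mpr ⟨h0, h2⟩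
    · intro h
      exact absurd (Finset.HasAntidiagonal.mem_antidiagonal.mpr (by omega)) h
  rw [hsingle]
  -- split off the k = 0 term of the range sum
  rw [Finset.sum_range_succ']
  simp only [pow_zero, Nat.add_sub_cancel]
  rw [if_pos (by omega : 1 ≤ n + 1)]
  have hAAc : ∀ m : ℕ, coeff (R := ℚ_[p]) m (AA p E)
      = if p ∣ m then coeff (R := ℚ_[p]) (m / p) E else 0 := fun m => coeff_mk m _
  have key : (coeff (R := ℚ_[p]) (n + 1)) (AA p E) * ((n : ℚ_[p]) + 1)
      = (p : ℚ_[p]) * ∑ k ∈ Finset.range (n + 1),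
          (if p ^ (k + 1) ≤ n + 1 then coeff (R := ℚ_[p]) (n + 1 - p ^ (k + 1)) (AA p E) else 0) := by
    by_cases hdvd : p ∣ (n + 1)
    · obtain ⟨m, hm⟩ := hdvd
      have hm1 : 1 ≤ m := Nat.pos_of_ne_zero (by rintro rfl; simp at hm)
      have hterm : ∀ k ∈ Finset.range (n + 1),
          (if p ^ (k + 1) ≤ n + 1 then coeff (R := ℚ_[p]) (n + 1 - p ^ (k + 1)) (AA p E) else 0)
          = (if p ^ k ≤ m then coeff (R := ℚ_[p]) (m - p ^ k) E else 0) := by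
        intro k _
        by_cases h : p ^ (k + 1) ≤ n + 1
        · rw [if_pos h, if_pos (by rw [pow_succ] at h; nlinarith [Nat.one_le_two_pow (n := k)]),
            hAAc]
          have hd2 : p ∣ n + 1 - p ^ (k + 1) :=
            Nat.dvd_sub ⟨m, hm⟩ (dvd_pow_self p (Nat.succ_ne_zero k))
          rw [if_pos hd2]
          congr 1
          rw [hm, pow_succ', ← Nat.mul_sub, Nat.mul_div_cancel_left _ (by omega : 0 < p)]
        · rw [if_neg h, if_neg (by rw [hm, pow_succ] at h; intro hc; nlinarith)]
      rw [Finset.sum_congr rfl hterm]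
      obtain ⟨m', rfl⟩ : ∃ m', m = m' + 1 := ⟨m - 1, by omega⟩
      have hrec := rec_E hS hE m'
      have hsub : ∑ k ∈ Finset.range (n + 1), (if p ^ k ≤ m' + 1 then coeff (R := ℚ_[p]) (m' + 1 - p ^ k) E else 0)
          = ∑ k ∈ Finset.range (m' + 2), (if p ^ k ≤ m' + 1 then coeff (R := ℚ_[p]) (m' + 1 - p ^ k) E else 0) := by
        apply (Finset.sum_subset (Finset.range_subset_range.mpr (by nlinarith)) _).symm
        intro x hx hnx
        rw [Finset.mem_range] at hx hnx
        rw [if_neg]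
        have h2x := Nat.lt_two_pow_self (n := x)
        have : (2 : ℕ) ^ x ≤ p ^ x := Nat.pow_le_pow_left hp2 x
        omega
      rw [hsub, ← hrec, hAAc, if_pos ⟨m' + 1, hm⟩]
      have hq : (n + 1) / p = m' + 1 := by rw [hm]; exact Nat.mul_div_cancel_left _ (by omega)
      rw [hq]
      have hcast : ((n : ℚ_[p]) + 1) = (p : ℚ_[p]) * (((m' + 1 : ℕ)) : ℚ_[p]) := by
        have := congrArg (Nat.cast : ℕ → ℚ_[p]) hm
        push_cast at this ⊢
        linear_combination this
      rw [hcast]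
      ring
    · have hz : coeff (R := ℚ_[p]) (n + 1) (AA p E) = 0 := by rw [hAAc, if_neg hdvd]
      rw [hz, zero_mul]
      have hterm : ∀ k ∈ Finset.range (n + 1),
          (if p ^ (k + 1) ≤ n + 1 then coeff (R := ℚ_[p]) (n + 1 - p ^ (k + 1)) (AA p E) else 0) = 0 := by
        intro k _
        by_cases h : p ^ (k + 1) ≤ n + 1
        · rw [if_pos h, hAAc, if_neg]
          intro hd
          have h2 : p ∣ p ^ (k + 1) := dvd_pow_self p (Nat.succ_ne_zero k)
          have h3 := dvd_add hd h2
          rw [Nat.sub_add_cancel h] at h3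
          exact hdvd h3
        · rw [if_neg h]
      rw [Finset.sum_congr rfl hterm, Finset.sum_const_zero, mul_zero]
  linear_combination key

private lemma constE : constantCoeff (R := ℚ_[p]) E = 1 := by
  rw [← coeff_zero_eq_constantCoeff_apply, hE]
  simp

private lemma main_identity : E ^ p = AA p E * BB p := by
  have hp1 : 1 ≤ p := (Fact.out : p.Prime).one_lt.le
  apply ode_unique (C (R := ℚ_[p]) (p : ℚ_[p]) * d⁄dX ℚ_[p] S)
  · rw [Derivation.leibniz_pow, deriv_E hS hE, smul_eq_mul,
      ← Nat.cast_smul_eq_nsmul ℚ_[p] p, smul_eq_C_mul]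
    have hEp : E ^ (p - 1) * E = E ^ p := by
      rw [← pow_succ]
      congr 1
      omega
    rw [← hEp]
    ring
  · rw [Derivation.leibniz, ode_A hS hE, ode_B, smul_eq_mul, smul_eq_mul]
    ring
  · rw [map_pow, constE hS hE, one_pow, map_mul]
    rw [← coeff_zero_eq_constantCoeff_apply, ← coeff_zero_eq_constantCoeff_apply, AA, BB,
      coeff_mk, coeff_mk, if_pos (dvd_zero p), Nat.zero_div,
      coeff_zero_eq_constantCoeff_apply, constE hS hE]
    simp



private lemma integral : ∀ n : ℕ, ‖coeff (R := ℚ_[p]) n E‖ ≤ 1 := by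
  have hp2 : 2 ≤ p := (Fact.out : p.Prime).two_le
  have hppos : (0 : ℝ) < (p : ℝ)⁻¹ := by positivity
  intro n
  induction n using Nat.strong_induction_on with
  | _ n ih =>
    rcases Nat.eq_zero_or_pos n with rfl | hn
    · rw [coeff_zero_eq_constantCoeff_apply, constE hS hE, norm_one]
    -- set up the integral truncation
    set e : ℕ → ℚ_[p] := fun j => coeff (R := ℚ_[p]) j E with he
    have hu : ∀ j, j < n → ∃ z : ℤ_[p], (z : ℚ_[p]) = e j := fun j hj => ⟨⟨e j, ih j hj⟩, rfl⟩
    choose u hu using hu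
    set Pz : Polynomial ℤ_[p] := ∑ j ∈ Finset.range n, Polynomial.monomial j
      (if h : j < n then u j h else 0) with hPz
    have hPzc : ∀ m : ℕ, Pz.coeff m = if h : m < n then u m h else 0 := by
      intro m
      rw [hPz, Polynomial.finset_sum_coeff]
      have : ∀ j ∈ Finset.range n, (Polynomial.monomial j
          (if h : j < n then u j h else 0)).coeff m
          = if j = m then (if h : j < n then u j h else 0) else 0 := by
        intro j _
        rw [Polynomial.coeff_monomial]
      rw [Finset.sum_congr rfl this, Finset.sum_ite_eq' (Finset.range n) m]
      by_cases hm : m < n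
      · rw [if_pos (Finset.mem_range.mpr hm)]
      · rw [if_neg (fun hc => hm (Finset.mem_range.mp hc)), dif_neg hm]
    set φ : Polynomial ℤ_[p] →+* PowerSeries ℚ_[p] :=
      (PowerSeries.map (PadicInt.Coe.ringHom)).comp Polynomial.coeToPowerSeries.ringHom with hφ
    have hφc : ∀ (q : Polynomial ℤ_[p]) (m : ℕ), coeff (R := ℚ_[p]) m (φ q) = ((q.coeff m : ℤ_[p]) : ℚ_[p]) := by
      intro q m
      rw [hφ, RingHom.comp_apply, PowerSeries.coeff_map,
        Polynomial.coeToPowerSeries.ringHom_apply, Polynomial.coeff_coe]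
      rfl
    set P : PowerSeries ℚ_[p] := φ Pz with hP
    have hPc : ∀ m : ℕ, coeff (R := ℚ_[p]) m P = if m < n then e m else 0 := by
      intro m
      rw [hP, hφc, hPzc]
      by_cases hm : m < n
      · rw [dif_pos hm, if_pos hm, hu]
      · rw [dif_neg hm, if_neg hm]; exact PadicInt.coe_zero
    set R : PowerSeries ℚ_[p] := E - P with hR
    have hRc : ∀ m, m < n → coeff (R := ℚ_[p]) m R = 0 := by
      intro m hm
      rw [hR, map_sub, hPc, if_pos hm, sub_self]
    have hRn : coeff (R := ℚ_[p]) n R = e n := by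
      rw [hR, map_sub, hPc, if_neg (lt_irrefl n), sub_zero]
    have hXR : (X : ℚ_[p]⟦X⟧) ^ n ∣ R := X_pow_dvd_iff.mpr hRc
    -- split the binomial expansion
    have hEPR : E = P + R := by rw [hR]; ring
    have hsplit : coeff (R := ℚ_[p]) n (E ^ p) = coeff (R := ℚ_[p]) n (P ^ p) + (p : ℚ_[p]) * e n := by
      rw [hEPR, add_pow, map_sum]
      have hterm : ∀ k ∈ Finset.range (p + 1),
          coeff (R := ℚ_[p]) n (P ^ k * R ^ (p - k) * ((p.choose k : ℕ) : ℚ_[p]⟦X⟧))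
          = (if k = p then coeff (R := ℚ_[p]) n (P ^ p) else 0)
            + (if k = p - 1 then (p : ℚ_[p]) * e n else 0) := by
        intro k hk
        rw [Finset.mem_range] at hk
        by_cases hkp : k = p
        · subst hkp
          rw [if_pos rfl, if_neg (by omega), add_zero, Nat.sub_self, pow_zero, mul_one,
            Nat.choose_self]
          simp
        · by_cases hk1 : k = p - 1
          · subst hk1
            rw [if_neg hkp, if_pos rfl, zero_add]
            have h1 : p - (p - 1) = 1 := by omega
            have h2 : p.choose (p - 1) = p := by
              rw [Nat.choose_symm (by omega : 1 ≤ p), Nat.choose_one_right]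
            rw [h1, h2, pow_one]
            have hcast : ((p : ℕ) : ℚ_[p]⟦X⟧) = PowerSeries.C (R := ℚ_[p]) ((p : ℕ) : ℚ_[p]) := by
              simp
            rw [hcast, coeff_mul_C, coeff_mul]
            rw [Finset.sum_eq_single (0, n)]
            · rw [hRn]
              have he0 : e 0 = 1 := by
                show coeff (R := ℚ_[p]) 0 E = 1
                rw [coeff_zero_eq_constantCoeff_apply, constE hS hE]
              have hP0 : (coeff (R := ℚ_[p]) (0, n).1) (P ^ (p - 1)) = 1 := by
                rw [show ((0, n).1) = 0 from rfl, coeff_zero_eq_constantCoeff_apply, map_pow,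
                  ← coeff_zero_eq_constantCoeff_apply, hPc, if_pos hn, he0, one_pow]
              rw [hP0, one_mul, mul_comm]
            · intro ij hij hne
              rw [Finset.HasAntidiagonal.mem_antidiagonal] at hij
              have : ij.2 < n := by
                rcases Nat.lt_or_ge ij.2 n with h | h
                · exact h
                · exfalso; exact hne (Prod.ext_iff.mpr ⟨by omega, by omega⟩)
              rw [hRc _ this, mul_zero]
            · intro h
              exact absurd (Finset.HasAntidiagonal.mem_antidiagonal.mpr (by omega)) h
          · rw [if_neg hkp, if_neg hk1, add_zero]
            have h2 : 2 ≤ p - k := by omega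
            have hdvd : (X : ℚ_[p]⟦X⟧) ^ (n + 1) ∣ P ^ k * R ^ (p - k) * ((p.choose k : ℕ) : ℚ_[p]⟦X⟧) := by
              have hR2 : (X : ℚ_[p]⟦X⟧) ^ (n + 1) ∣ R ^ 2 := by
                apply dvd_trans (pow_dvd_pow X (by omega : n + 1 ≤ n + n))
                rw [pow_add, sq]
                exact mul_dvd_mul hXR hXR
              have : R ^ 2 ∣ R ^ (p - k) := pow_dvd_pow R h2
              exact Dvd.dvd.mul_right (Dvd.dvd.mul_left (hR2.trans this) _) _
            exact X_pow_dvd_iff.mp hdvd n (by omega)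
      rw [Finset.sum_congr rfl hterm, Finset.sum_add_distrib,
        Finset.sum_ite_eq' (Finset.range (p + 1)) p,
        Finset.sum_ite_eq' (Finset.range (p + 1)) (p - 1),
        if_pos (Finset.mem_range.mpr (by omega)), if_pos (Finset.mem_range.mpr (by omega))]
    -- Frobenius congruence
    set w : Polynomial ℤ_[p] := Pz ^ p - Polynomial.expand ℤ_[p] p Pz with hw
    have hwmap : Polynomial.map (PadicInt.toZMod) w = 0 := by
      rw [hw, Polynomial.map_sub, Polynomial.map_pow, Polynomial.map_expand]
      rw [← Polynomial.map_frobenius_expand p (Polynomial.map PadicInt.toZMod Pz), ZMod.frobenius_zmod,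
        Polynomial.map_id, sub_self]
    have hwc : ∀ m : ℕ, ‖w.coeff m‖ ≤ (p : ℝ)⁻¹ := by
      intro m
      have h0 : PadicInt.toZMod (w.coeff m) = 0 := by
        have := congrArg (fun q => Polynomial.coeff q m) hwmap
        simpa [Polynomial.coeff_map] using this
      have hmem : w.coeff m ∈ RingHom.ker (PadicInt.toZMod (p := p)) := h0
      rw [PadicInt.ker_toZMod, PadicInt.maximalIdeal_eq_span_p, Ideal.mem_span_singleton] at hmem
      obtain ⟨y, hy⟩ := hmem
      rw [hy, norm_mul, PadicInt.norm_p]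
      calc (p : ℝ)⁻¹ * ‖y‖ ≤ (p : ℝ)⁻¹ * 1 := by
            exact mul_le_mul_of_nonneg_left (PadicInt.norm_le_one y) hppos.le
        _ = (p : ℝ)⁻¹ := mul_one _
    have hfrob : ‖coeff (R := ℚ_[p]) n (P ^ p) - coeff (R := ℚ_[p]) n (AA p E)‖ ≤ (p : ℝ)⁻¹ := by
      have h1 : coeff (R := ℚ_[p]) n (P ^ p) = (((Pz ^ p).coeff n : ℤ_[p]) : ℚ_[p]) := by
        rw [hP, ← map_pow, hφc]
      have h2 : coeff (R := ℚ_[p]) n (AA p E) = (((Polynomial.expand ℤ_[p] p Pz).coeff n : ℤ_[p]) : ℚ_[p]) := by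
        rw [AA, coeff_mk, Polynomial.coeff_expand (by omega : 0 < p)]
        by_cases hd : p ∣ n
        · rw [if_pos hd, if_pos hd, hPzc, dif_pos (Nat.div_lt_self hn (by omega)),
            hu]
        · rw [if_neg hd, if_neg hd]; exact PadicInt.coe_zero.symm
      rw [h1, h2, ← PadicInt.coe_sub]
      have : ((Pz ^ p).coeff n) - ((Polynomial.expand ℤ_[p] p Pz).coeff n) = w.coeff n := by
        rw [hw, Polynomial.coeff_sub]
      rw [this, PadicInt.padic_norm_e_of_padicInt]
      exact hwc n
    -- the A * B estimate
    have hABn : ‖coeff (R := ℚ_[p]) n (AA p E * BB p) - coeff (R := ℚ_[p]) n (AA p E)‖ ≤ (p : ℝ)⁻¹ := by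
      rw [coeff_mul]
      rw [Finset.sum_eq_sum_sdiff_singleton_add
        (Finset.HasAntidiagonal.mem_antidiagonal.mpr (by omega : (n, 0).1 + (n, 0).2 = n)) _]
      have hb0 : coeff (R := ℚ_[p]) (n, 0).2 (BB p) = 1 := by
        rw [BB, coeff_mk]
        simp
      rw [hb0, mul_one, add_sub_cancel_right]
      apply my_norm_sum_le _ _ hppos.le
      intro ij hij
      rw [Finset.mem_sdiff, Finset.HasAntidiagonal.mem_antidiagonal] at hij
      obtain ⟨hij1, hij2⟩ := hij
      have hj0 : ij.2 ≠ 0 := by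
        intro h0
        exact hij2 (Finset.mem_singleton.mpr (Prod.ext_iff.mpr ⟨by omega, h0⟩))
      have hbj : ‖coeff (R := ℚ_[p]) ij.2 (BB p)‖ ≤ (p : ℝ)⁻¹ := by
        rw [BB, coeff_mk]
        exact norm_p_pow_div_factorial hj0
      have hai : ‖coeff (R := ℚ_[p]) ij.1 (AA p E)‖ ≤ 1 := by
        rw [AA, coeff_mk]
        by_cases hd : p ∣ ij.1
        · rw [if_pos hd]
          exact ih _ (by
            have : ij.1 / p ≤ ij.1 := Nat.div_le_self _ _
            omega)
        · rw [if_neg hd, norm_zero]; norm_num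
      calc ‖coeff (R := ℚ_[p]) ij.1 (AA p E) * coeff (R := ℚ_[p]) ij.2 (BB p)‖
          = ‖coeff (R := ℚ_[p]) ij.1 (AA p E)‖ * ‖coeff (R := ℚ_[p]) ij.2 (BB p)‖ := norm_mul _ _
        _ ≤ 1 * (p : ℝ)⁻¹ := mul_le_mul hai hbj (norm_nonneg _) zero_le_one
        _ = (p : ℝ)⁻¹ := one_mul _
    -- put it together
    have hkey : (p : ℚ_[p]) * e n
        = (coeff (R := ℚ_[p]) n (AA p E * BB p) - coeff (R := ℚ_[p]) n (AA p E))
          - (coeff (R := ℚ_[p]) n (P ^ p) - coeff (R := ℚ_[p]) n (AA p E)) := by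
      have := congrArg (coeff (R := ℚ_[p]) n) (main_identity hS hE)
      rw [hsplit] at this
      linear_combination this
    have hnorm : ‖(p : ℚ_[p]) * e n‖ ≤ (p : ℝ)⁻¹ := by
      rw [hkey, sub_eq_add_neg]
      apply le_trans (Padic.nonarchimedean _ _)
      rw [norm_neg]
      exact max_le hABn hfrob
    rw [norm_mul, Padic.norm_p] at hnorm
    exact le_of_mul_le_mul_left (by rw [mul_one]; exact hnorm) hppos



omit hE in
private lemma coeff_S_small {j : ℕ} (hj : j < p) :
    coeff (R := ℚ_[p]) j S = if j = 1 then 1 else 0 := by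
  have hp2 : 2 ≤ p := (Fact.out : p.Prime).two_le
  rw [hS]
  rcases Nat.lt_or_ge j 2 with h2 | h2
  · interval_cases j
    · simp
    · rw [if_pos rfl, if_pos ⟨one_ne_zero, by simp [Nat.log_one_right]⟩]
      simp [Nat.log_one_right]
  · have hlog : Nat.log p j = 0 := Nat.log_eq_zero_iff.mpr (Or.inl hj)
    have hc : ¬(j ≠ 0 ∧ p ^ Nat.log p j = j) := by
      rw [hlog, pow_zero]; omega
    rw [if_neg hc, if_neg (by omega : ¬j = 1)]

private lemma coeff_S_pow_small : ∀ (k : ℕ) {m : ℕ}, m < p →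
    coeff (R := ℚ_[p]) m (S ^ k) = if m = k then 1 else 0 := by
  intro k
  induction k with
  | zero => intro m _; rw [pow_zero, coeff_one]
  | succ k ihk =>
    intro m hm
    rw [pow_succ, coeff_mul, Finset.Nat.sum_antidiagonal_eq_sum_range_succ_mk]
    have hterm : ∀ i ∈ Finset.range (m + 1),
        coeff (R := ℚ_[p]) i (S ^ k) * coeff (R := ℚ_[p]) (m - i) S
        = if i = k then (if m - i = 1 then (1 : ℚ_[p]) else 0) else 0 := by
      intro i hi
      rw [Finset.mem_range] at hi
      rw [ihk (by omega), coeff_S_small hS (by omega)]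
      split_ifs with h1 h2 h3 <;> simp_all
    rw [Finset.sum_congr rfl hterm, Finset.sum_ite_eq' (Finset.range (m + 1)) k]
    by_cases h : m = k + 1
    · rw [if_pos (Finset.mem_range.mpr (by omega)), if_pos (by omega), if_pos h]
    · rw [if_neg h]
      by_cases h2 : k ∈ Finset.range (m + 1)
      · rw [Finset.mem_range] at h2
        rw [if_pos (Finset.mem_range.mpr h2), if_neg (by omega)]
      · rw [if_neg h2]



private lemma coeff_E_small {m : ℕ} (hm : m < p) :
    coeff (R := ℚ_[p]) m E = ((Nat.factorial m : ℚ_[p]))⁻¹ := by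
  rw [hE]
  have hterm : ∀ k ∈ Finset.range (m + 1),
      coeff (R := ℚ_[p]) m (S ^ k) / (Nat.factorial k : ℚ_[p])
      = if k = m then ((Nat.factorial k : ℚ_[p]))⁻¹ else 0 := by
    intro k _
    rw [coeff_S_pow_small hS hE k hm]
    split_ifs with h1 h2 h3 <;> first | omega | (rw [one_div]) | simp
  rw [Finset.sum_congr rfl hterm, Finset.sum_ite_eq' (Finset.range (m + 1)) m,
    if_pos (Finset.mem_range.mpr (by omega))]



end Main

end DworkAux

/-- Dwork's splitting function: let `γ` with `v(γ) = 1/(p-1)` be a root of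
`Σ_{m≥0} γ^{p^m}/p^m = 0`, and let `θ(t) = E(γt) = Σ γ_m t^m` where
`E(t) = exp(Σ_{m≥0} t^{p^m}/p^m)` is the Artin–Hasse exponential. Then
`v(γ_m) ≥ m/(p-1)` and `γ_m = γ^m/m!` for `0 ≤ m ≤ p-1`. Valuations `v`
(normalized by `v(p)=1`) are expressed via norms: `v(x) ≥ c ↔ ‖x‖ ≤ p^{-c}`. -/
theorem stmt_9 (p : ℕ) [Fact p.Prime] (K : Type*) [NormedField K] [CompleteSpace K]
    [IsUltrametricDist K] [NormedAlgebra ℚ_[p] K]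
    (hisom : ∀ x : ℚ_[p], ‖algebraMap ℚ_[p] K x‖ = ‖x‖)
    (γ : K) (hγ : ‖γ‖ = (p : ℝ) ^ (-(1 : ℝ) / (p - 1)))
    (hroot : HasSum (fun m : ℕ => γ ^ (p ^ m) / (p : K) ^ m) 0)
    -- the series `S(t) = Σ_{m≥0} t^{p^m}/p^m`
    (S : PowerSeries ℚ_[p])
    (hS : ∀ n : ℕ, (coeff (R := ℚ_[p]) n) S =
      if n ≠ 0 ∧ p ^ (Nat.log p n) = n then ((p : ℚ_[p]) ^ (Nat.log p n))⁻¹ else 0)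
    -- the Artin–Hasse exponential `E = exp(S)`
    (E : PowerSeries ℚ_[p])
    (hE : ∀ m : ℕ, (coeff (R := ℚ_[p]) m) E =
      ∑ n ∈ Finset.range (m + 1), (coeff (R := ℚ_[p]) m) (S ^ n) / (Nat.factorial n : ℚ_[p]))
    -- the coefficients `γ_m` of `θ(t) = E(γ t)`
    (g : ℕ → K) (hg : ∀ m : ℕ, g m = algebraMap ℚ_[p] K ((coeff (R := ℚ_[p]) m) E) * γ ^ m) :
    (∀ m : ℕ, ‖g m‖ ≤ (p : ℝ) ^ (-(m : ℝ) / (p - 1))) ∧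
    ∀ m : ℕ, m ≤ p - 1 → g m = γ ^ m / (Nat.factorial m : K) := by
  have hp2 : 2 ≤ p := (Fact.out : p.Prime).two_le
  have hppos : (0 : ℝ) ≤ (p : ℝ) := by positivity
  constructor
  · intro m
    rw [hg m, norm_mul, hisom, norm_pow, hγ]
    have hrpow : ((p : ℝ) ^ (-(1 : ℝ) / (p - 1))) ^ m = (p : ℝ) ^ (-(m : ℝ) / (p - 1)) := by
      rw [← Real.rpow_natCast ((p : ℝ) ^ (-(1 : ℝ) / (p - 1))) m, ← Real.rpow_mul hppos]
      congr 1
      ring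
    rw [hrpow]
    calc ‖(coeff (R := ℚ_[p]) m) E‖ * (p : ℝ) ^ (-(m : ℝ) / (p - 1))
        ≤ 1 * (p : ℝ) ^ (-(m : ℝ) / (p - 1)) := by
          apply mul_le_mul_of_nonneg_right (integral hS hE m) (Real.rpow_nonneg hppos _)
      _ = (p : ℝ) ^ (-(m : ℝ) / (p - 1)) := one_mul _
  · intro m hm
    rw [hg m, coeff_E_small hS hE (by omega : m < p), map_inv₀, map_natCast]
    rw [div_eq_mul_inv, mul_comm]
end

section
/- Let p = dk - 1 be prime with p ∤ d, and F_i as above (coefficients of θ(x^d)θ(ax^{d-1}) with a a unit). For integers 1 ≤ i ≤ d-1, 0 ≤ j ≤ d-1 with i + j ≥ d, one has v(F_{pi-j}) = (ki - 1)/(p - 1); in particular v(F_{pi-(d-i)}) = (ki-1)/(p-1) and F_{pi-(d-i)} = γ^{ki-1}(1 + O(γ))/(ki-1)! where O(γ) denotes an element of valuation ≥ 1/(p-1). -/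
open Finset


lemma aux_norm_coprime {K : Type*} [NormedField K] [IsUltrametricDist K]
    {p : ℕ} (hp : p.Prime) (hpnorm : ‖(p : K)‖ = (p : ℝ)⁻¹)
    {c : ℕ} (hc : ¬ p ∣ c) : ‖(c : K)‖ = 1 := by
  refine le_antisymm (IsUltrametricDist.norm_natCast_le_one K c) ?_
  by_contra hlt
  push_neg at hlt
  have hcop : Nat.gcd p c = 1 := (Nat.Prime.coprime_iff_not_dvd hp).mpr hc
  have hbez : (1 : ℤ) = p * Nat.gcdA p c + c * Nat.gcdB p c := by
    have := Nat.gcd_eq_gcd_ab p c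
    rw [hcop] at this
    exact_mod_cast this
  have h1 : (1 : K) = (p : K) * ((Nat.gcdA p c : ℤ) : K) + (c : K) * ((Nat.gcdB p c : ℤ) : K) := by
    have := congrArg (fun z : ℤ => (z : K)) hbez
    push_cast at this
    simpa using this
  have hp2 : (2 : ℝ) ≤ p := by exact_mod_cast hp.two_le
  have hA : ‖((Nat.gcdA p c : ℤ) : K)‖ ≤ 1 := IsUltrametricDist.norm_intCast_le_one K _
  have hB : ‖((Nat.gcdB p c : ℤ) : K)‖ ≤ 1 := IsUltrametricDist.norm_intCast_le_one K _
  have hkey : (1 : ℝ) ≤ max ‖(p : K) * ((Nat.gcdA p c : ℤ) : K)‖ ‖(c : K) * ((Nat.gcdB p c : ℤ) : K)‖ := by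
    calc (1:ℝ) = ‖(1 : K)‖ := (norm_one).symm
      _ = ‖(p : K) * ((Nat.gcdA p c : ℤ) : K) + (c : K) * ((Nat.gcdB p c : ℤ) : K)‖ := by rw [← h1]
      _ ≤ _ := IsUltrametricDist.norm_add_le_max _ _
  have h2 : ‖(p : K) * ((Nat.gcdA p c : ℤ) : K)‖ < 1 := by
    rw [norm_mul, hpnorm]
    calc (p:ℝ)⁻¹ * ‖((Nat.gcdA p c : ℤ) : K)‖ ≤ (p:ℝ)⁻¹ * 1 := by
          apply mul_le_mul_of_nonneg_left hA (by positivity)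
      _ < 1 := by rw [mul_one]; rw [inv_lt_one_iff₀]; right; linarith
  have h3 : ‖(c : K) * ((Nat.gcdB p c : ℤ) : K)‖ < 1 := by
    rw [norm_mul]
    calc ‖(c:K)‖ * ‖((Nat.gcdB p c : ℤ) : K)‖ ≤ ‖(c:K)‖ * 1 := by
          apply mul_le_mul_of_nonneg_left hB (norm_nonneg _)
      _ < 1 := by rw [mul_one]; exact hlt
  rcases max_cases ‖(p : K) * ((Nat.gcdA p c : ℤ) : K)‖ ‖(c : K) * ((Nat.gcdB p c : ℤ) : K)‖ with ⟨h,_⟩|⟨h,_⟩ <;>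
    rw [h] at hkey <;> linarith

lemma aux_norm_factorial {K : Type*} [NormedField K] [IsUltrametricDist K]
    {p : ℕ} (hp : p.Prime) (hpnorm : ‖(p : K)‖ = (p : ℝ)⁻¹)
    {n : ℕ} (hn : n < p) : ‖((n.factorial : ℕ) : K)‖ = 1 :=
  aux_norm_coprime hp hpnorm (fun h => absurd ((Nat.Prime.dvd_factorial hp).mp h) (by omega))

lemma aux_rpow_pow {p : ℝ} (hp : 0 < p) (c : ℝ) (m : ℕ) :
    (p ^ c) ^ m = p ^ (c * m) := by
  rw [← Real.rpow_natCast (p ^ c) m, ← Real.rpow_mul hp.le]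

lemma helper_key {K : Type*} [NormedField K] [IsUltrametricDist K]
    (p d : ℕ) (hp : p.Prime) (hd : 2 ≤ d)
    (hpnorm : ‖(p : K)‖ = (p : ℝ)⁻¹)
    (γ : K) (hγ : ‖γ‖ = (p : ℝ) ^ (-(1 : ℝ) / (p - 1)))
    (g : ℕ → K) (hg : ∀ m : ℕ, ‖g m‖ ≤ (p : ℝ) ^ (-(m : ℝ) / (p - 1)))
    (hglow : ∀ m : ℕ, m ≤ p - 1 → g m = γ ^ m / (Nat.factorial m : K))
    (a : K) (ha : ‖a‖ = 1)
    (N m0 n0 : ℕ) (heq : d * m0 + (d - 1) * n0 = N) (hn0 : n0 < d)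
    (hs : m0 + n0 + 1 ≤ p) :
    ‖∑ mn ∈ (Finset.range (N + 1) ×ˢ Finset.range (N + 1)).filter
          (fun mn => d * mn.1 + (d - 1) * mn.2 = N),
        g mn.1 * g mn.2 * a ^ mn.2‖ = (p : ℝ) ^ (-((m0 + n0 : ℕ) : ℝ) / ((p : ℝ) - 1)) ∧
    ∃ R : K, ‖R‖ ≤ (p : ℝ) ^ (-((m0 + n0 + 1 : ℕ) : ℝ) / ((p : ℝ) - 1)) ∧
      (∑ mn ∈ (Finset.range (N + 1) ×ˢ Finset.range (N + 1)).filter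
          (fun mn => d * mn.1 + (d - 1) * mn.2 = N),
        g mn.1 * g mn.2 * a ^ mn.2)
        = γ ^ (m0 + n0) / ((Nat.factorial m0 : K) * (Nat.factorial n0 : K)) * a ^ n0 + R := by
  have hp1 : (1 : ℝ) < p := by exact_mod_cast hp.one_lt
  have hp0 : (0 : ℝ) < p := by linarith
  have hpp : (0 : ℝ) < (p : ℝ) - 1 := by linarith
  set S := (Finset.range (N + 1) ×ˢ Finset.range (N + 1)).filter
      (fun mn => d * mn.1 + (d - 1) * mn.2 = N) with hS
  -- membership of the minimal pair
  have hdm : d * m0 ≤ N := Nat.le.intro heq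
  have hdn : (d - 1) * n0 ≤ N := le_trans (Nat.le_add_left _ _) heq.le
  have hm0N : m0 ≤ N := le_trans (Nat.le_mul_of_pos_left m0 (by omega)) hdm
  have hn0N : n0 ≤ N := le_trans (Nat.le_mul_of_pos_left n0 (by omega)) hdn
  have hq0 : (m0, n0) ∈ S := by
    simp only [hS, Finset.mem_filter, Finset.mem_product, Finset.mem_range]
    exact ⟨⟨by omega, by omega⟩, heq⟩
  -- the split
  set T : K := g m0 * g n0 * a ^ n0 with hT
  set R : K := ∑ mn ∈ S.erase (m0, n0), g mn.1 * g mn.2 * a ^ mn.2 with hR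
  have hsplit : (∑ mn ∈ S, g mn.1 * g mn.2 * a ^ mn.2) = T + R :=
    (Finset.add_sum_erase S _ hq0).symm
  -- value and norm of T
  have hm0p : m0 ≤ p - 1 := by omega
  have hn0p : n0 ≤ p - 1 := by omega
  have hTval : T = γ ^ (m0 + n0) / ((Nat.factorial m0 : K) * (Nat.factorial n0 : K)) * a ^ n0 := by
    rw [hT, hglow m0 hm0p, hglow n0 hn0p, pow_add]
    ring
  have hfm0 : ‖((Nat.factorial m0 : ℕ) : K)‖ = 1 := aux_norm_factorial hp hpnorm (by omega)
  have hfn0 : ‖((Nat.factorial n0 : ℕ) : K)‖ = 1 := aux_norm_factorial hp hpnorm (by omega)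
  have hTnorm : ‖T‖ = (p : ℝ) ^ (-((m0 + n0 : ℕ) : ℝ) / ((p : ℝ) - 1)) := by
    rw [hTval, norm_mul, norm_div, norm_pow, norm_pow, ha, one_pow, mul_one, norm_mul,
      hfm0, hfn0, mul_one, div_one, hγ, aux_rpow_pow hp0]
    congr 1
    push_cast
    ring
  -- norm of R
  have hRnorm : ‖R‖ ≤ (p : ℝ) ^ (-((m0 + n0 + 1 : ℕ) : ℝ) / ((p : ℝ) - 1)) := by
    rw [hR]
    apply IsUltrametricDist.norm_sum_le_of_forall_le_of_nonneg (by positivity)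
    rintro ⟨m, n⟩ hmn
    simp only [Finset.mem_erase, hS, Finset.mem_filter, Finset.mem_product,
      Finset.mem_range, Ne, Prod.mk.injEq] at hmn
    obtain ⟨hne, ⟨-, -⟩, hmneq⟩ := hmn
    -- show m0 + n0 + 1 ≤ m + n
    have hge : m0 + n0 + 1 ≤ m + n := by
      have hz : (d : ℤ) * m + ((d : ℤ) - 1) * n = (d : ℤ) * m0 + ((d : ℤ) - 1) * n0 := by
        have h1 : (d : ℤ) * m + ((d : ℤ) - 1) * n = (N : ℤ) := by
          have := congrArg (fun x : ℕ => (x : ℤ)) hmneq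
          push_cast [Nat.cast_sub (by omega : 1 ≤ d)] at this
          linarith
        have h2 : (d : ℤ) * m0 + ((d : ℤ) - 1) * n0 = (N : ℤ) := by
          have := congrArg (fun x : ℕ => (x : ℤ)) heq
          push_cast [Nat.cast_sub (by omega : 1 ≤ d)] at this
          linarith
        rw [h1, h2]
      have hcop : IsCoprime (d : ℤ) ((d : ℤ) - 1) := ⟨1, -1, by ring⟩
      have hdvd : (d : ℤ) ∣ ((n : ℤ) - n0) :=
        hcop.dvd_of_dvd_mul_right ⟨(m0 : ℤ) - m, by linarith⟩
      obtain ⟨t, ht⟩ := hdvd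
      have hd0 : (d : ℤ) ≠ 0 := by positivity
      have hdz : (2 : ℤ) ≤ d := by exact_mod_cast hd
      have htpos : 1 ≤ t := by
        rcases lt_trichotomy t 0 with h | h | h
        · exfalso
          have h1 : (d : ℤ) * t ≤ (d : ℤ) * (-1) := by
            apply mul_le_mul_of_nonneg_left (by omega) (by positivity)
          have h2 : (0 : ℤ) ≤ (n : ℤ) := Int.natCast_nonneg n
          have h3 : ((n0 : ℤ)) < d := by exact_mod_cast hn0
          linarith
        · exfalso
          have hn_eq : (n : ℤ) = n0 := by rw [h, mul_zero] at ht; linarith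
          have hnn : n = n0 := by exact_mod_cast hn_eq
          subst hnn
          have hmm : (d : ℤ) * m = d * m0 := by linarith
          have : (m : ℤ) = m0 := mul_left_cancel₀ hd0 hmm
          exact hne ⟨by exact_mod_cast this, rfl⟩
        · omega
      have hmn_eq : (m : ℤ) + n = m0 + n0 + t := by
        apply mul_left_cancel₀ hd0
        have hnsub : (n : ℤ) = n0 + d * t := by linarith
        linear_combination hz + hnsub
      have : ((m0 : ℤ) + n0 + 1) ≤ (m : ℤ) + n := by linarith
      exact_mod_cast this
    -- term bound
    calc ‖g m * g n * a ^ n‖ = ‖g m‖ * ‖g n‖ := by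
          rw [norm_mul, norm_mul, norm_pow, ha, one_pow, mul_one]
      _ ≤ (p : ℝ) ^ (-(m : ℝ) / ((p : ℝ) - 1)) * (p : ℝ) ^ (-(n : ℝ) / ((p : ℝ) - 1)) := by
          apply mul_le_mul (hg m) (hg n) (norm_nonneg _) (by positivity)
      _ = (p : ℝ) ^ ((-(m : ℝ) - n) / ((p : ℝ) - 1)) := by
          rw [← Real.rpow_add hp0]; congr 1; ring
      _ ≤ (p : ℝ) ^ (-((m0 + n0 + 1 : ℕ) : ℝ) / ((p : ℝ) - 1)) := by
          apply Real.rpow_le_rpow_of_exponent_le hp1.le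
          rw [div_le_div_iff_of_pos_right hpp]
          have : ((m0 : ℝ) + n0 + 1) ≤ (m : ℝ) + n := by exact_mod_cast hge
          push_cast
          linarith
  -- conclude
  have hTR : ‖R‖ < ‖T‖ := by
    rw [hTnorm]
    calc ‖R‖ ≤ _ := hRnorm
      _ < _ := by
        apply Real.rpow_lt_rpow_of_exponent_lt hp1
        rw [div_lt_div_iff_of_pos_right hpp]
        push_cast
        linarith
  have hnorm : ‖(∑ mn ∈ S, g mn.1 * g mn.2 * a ^ mn.2)‖ = ‖T‖ := by
    rw [hsplit, IsUltrametricDist.norm_add_eq_max_of_norm_ne_norm (by linarith [hTR] : ‖T‖ ≠ ‖R‖),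
      max_eq_left hTR.le]
  refine ⟨by rw [hnorm, hTnorm], R, hRnorm, by rw [hsplit, hTval]⟩

/-- For `p = dk - 1` prime and `i + j ≥ d` (with `1 ≤ i ≤ d-1`, `0 ≤ j ≤ d-1`), one has
`v(F_{pi-j}) = (ki-1)/(p-1)`, and `F_{pi-(d-i)} = γ^{ki-1}(1+O(γ))/(ki-1)!` where
`O(γ)` has valuation `≥ 1/(p-1)`. Valuations are expressed via norms. -/
theorem stmt_11 (p d k : ℕ) (hp : p.Prime) (hd : 2 ≤ d) (hk : 1 ≤ k)
    (hpdk : p = d * k - 1) (hpd : ¬ p ∣ d)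
    (K : Type*) [NormedField K] [IsUltrametricDist K] [CharZero K]
    (hpnorm : ‖(p : K)‖ = (p : ℝ)⁻¹)
    (γ : K) (hγ : ‖γ‖ = (p : ℝ) ^ (-(1 : ℝ) / (p - 1)))
    (g : ℕ → K) (hg : ∀ m : ℕ, ‖g m‖ ≤ (p : ℝ) ^ (-(m : ℝ) / (p - 1)))
    (hglow : ∀ m : ℕ, m ≤ p - 1 → g m = γ ^ m / (Nat.factorial m : K))
    (a : K) (ha : ‖a‖ = 1)
    (F : ℕ → K)
    (hF : ∀ i : ℕ, F i =
      ∑ mn ∈ (Finset.range (i + 1) ×ˢ Finset.range (i + 1)).filter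
          (fun mn => d * mn.1 + (d - 1) * mn.2 = i),
        g mn.1 * g mn.2 * a ^ mn.2) :
    ∀ i j : ℕ, 1 ≤ i → i ≤ d - 1 → j ≤ d - 1 → d ≤ i + j →
      ‖F (p * i - j)‖ = (p : ℝ) ^ (-((k * i - 1 : ℕ) : ℝ) / (p - 1)) ∧
      ∃ ε : K, ‖ε‖ ≤ (p : ℝ) ^ (-(1 : ℝ) / (p - 1)) ∧
        F (p * i - (d - i)) = γ ^ (k * i - 1) * (1 + ε) / (Nat.factorial (k * i - 1) : K) := by
  intro i j hi1 hi2 hj hij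
  have hp2 : 2 ≤ p := hp.two_le
  have hp1 : (1 : ℝ) < p := by exact_mod_cast hp.one_lt
  have hp0 : (0 : ℝ) < p := by linarith
  have hpp : (0 : ℝ) < (p : ℝ) - 1 := by linarith
  have hdk1 : 1 ≤ d * k := Nat.mul_pos (by omega) hk
  have hpz : (p : ℤ) = (d : ℤ) * k - 1 := by
    rw [hpdk]; push_cast [Nat.cast_sub hdk1]; ring
  -- k * i ≤ p
  obtain ⟨s, hs⟩ : ∃ s, s = k * i := ⟨_, rfl⟩
  have hik : i ≤ s := by rw [hs]; exact Nat.le_mul_of_pos_left i (by omega)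
  have hkip : s ≤ p := by
    have hid : (i : ℤ) ≤ (d : ℤ) - 1 := by
      have : (i : ℤ) ≤ ((d - 1 : ℕ) : ℤ) := by exact_mod_cast hi2
      rwa [Nat.cast_sub (by omega : 1 ≤ d)] at this
    have h1 : (k : ℤ) * i ≤ (k : ℤ) * ((d : ℤ) - 1) :=
      mul_le_mul_of_nonneg_left hid (by positivity)
    have hk1 : (1 : ℤ) ≤ k := by exact_mod_cast hk
    have : (s : ℤ) ≤ (p : ℤ) := by rw [hs]; push_cast; nlinarith [h1]
    exact_mod_cast this
  -- the minimal pair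
  obtain ⟨n0, hn0eq⟩ : ∃ n0, i + j = n0 + d := ⟨i + j - d, by omega⟩
  have hn0d : n0 < d := by omega
  obtain ⟨m0, hm0⟩ : ∃ m0, s = m0 + n0 + 1 := ⟨s - n0 - 1, by omega⟩
  have hski : k * i = m0 + n0 + 1 := by rw [← hs]; exact hm0
  have hsz : (k : ℤ) * i = (m0 : ℤ) + n0 + 1 := by exact_mod_cast hski
  have hn0z : (i : ℤ) + j = (n0 : ℤ) + d := by exact_mod_cast hn0eq
  have hki : k * i - 1 = m0 + n0 := Nat.sub_eq_of_eq_add hski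
  -- first equation
  have hNat : p * i = d * m0 + (d - 1) * n0 + j := by
    zify [show 1 ≤ d by omega]
    linear_combination (i : ℤ) * hpz + (d : ℤ) * hsz - hn0z
  have heq1 : d * m0 + (d - 1) * n0 = p * i - j := (Nat.sub_eq_of_eq_add hNat).symm
  have hsp : m0 + n0 + 1 ≤ p := by omega
  have h1 := helper_key p d hp hd hpnorm γ hγ g hg hglow a ha (p * i - j) m0 n0 heq1 hn0d hsp
  -- second equation
  set M := m0 + n0 with hM
  have hNat2 : p * i = d * M + (d - 1) * 0 + (d - i) := by
    zify [show 1 ≤ d by omega, show i ≤ d by omega]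
    push_cast [hM]
    linear_combination (i : ℤ) * hpz + (d : ℤ) * hsz
  have heq2 : d * M + (d - 1) * 0 = p * i - (d - i) := (Nat.sub_eq_of_eq_add hNat2).symm
  have h2 := helper_key p d hp hd hpnorm γ hγ g hg hglow a ha (p * i - (d - i)) M 0 heq2
    (by omega) (by omega)
  obtain ⟨-, R, hRle, hFeq⟩ := h2
  simp only [Nat.add_zero, pow_zero, Nat.factorial_zero, Nat.cast_one, mul_one] at hRle hFeq
  have hγ0 : γ ≠ 0 := by
    intro h
    rw [h, norm_zero] at hγ
    exact absurd hγ.symm (ne_of_gt (Real.rpow_pos_of_pos hp0 _))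
  have hMfact0 : ((M.factorial : ℕ) : K) ≠ 0 := Nat.cast_ne_zero.mpr M.factorial_ne_zero
  have hfactM : ‖((M.factorial : ℕ) : K)‖ = 1 := aux_norm_factorial hp hpnorm (by omega)
  have hγM : ‖γ ^ M‖ = (p : ℝ) ^ (-(M : ℝ) / ((p : ℝ) - 1)) := by
    rw [norm_pow, hγ, aux_rpow_pow hp0]
    congr 1
    ring
  refine ⟨by rw [hF (p * i - j), hki]; exact h1.1, R * ((M.factorial : ℕ) : K) / γ ^ M, ?_, ?_⟩
  · calc ‖R * ((M.factorial : ℕ) : K) / γ ^ M‖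
        = ‖R‖ * ‖((M.factorial : ℕ) : K)‖ / ‖γ ^ M‖ := by rw [norm_div, norm_mul]
      _ = ‖R‖ / (p : ℝ) ^ (-(M : ℝ) / ((p : ℝ) - 1)) := by rw [hfactM, mul_one, hγM]
      _ ≤ (p : ℝ) ^ (-((M + 1 : ℕ) : ℝ) / ((p : ℝ) - 1)) / (p : ℝ) ^ (-(M : ℝ) / ((p : ℝ) - 1)) :=
          (div_le_div_iff_of_pos_right (by positivity)).mpr hRle
      _ = (p : ℝ) ^ (-(1 : ℝ) / ((p : ℝ) - 1)) := by
          rw [← Real.rpow_sub hp0]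
          congr 1
          push_cast
          ring
  · rw [hF (p * i - (d - i)), hki, hFeq]
    field_simp
end

section
/- With w_i defined as above (p = dk - 1 prime, d ≥ 2), for every 0 ≤ s ≤ d - 1: Σ_{i=0}^{s} w_i = s(s+1)/(2d) + s(s+1)/(d(p-1)) if s ≤ (d-1)/2, and Σ_{i=0}^{s} w_i = s(s+1)/(2d) + (d-s)(d-s-1)/(d(p-1)) if s ≥ d/2. In both cases Σ_{i=0}^{s} w_i ≤ s(s+1)/(2d) + (d²-1)/(4d(p-1)). -/
theorem stmt_13 (p d k : ℕ) (hp : p.Prime) (hd : 2 ≤ d) (hk : 1 ≤ k)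
    (hpdk : p = d * k - 1) (w : ℕ → ℚ)
    (hw : ∀ i : ℕ, w i =
      if 2 * i < d then ((p : ℚ) + 1) * i / (d * ((p : ℚ) - 1))
      else if 2 * i = d then 1 / 2
      else (((p : ℚ) + 1) * i - 2 * d) / (d * ((p : ℚ) - 1))) :
    ∀ s : ℕ, s ≤ d - 1 →
      (2 * s ≤ d - 1 →
        ∑ i ∈ Finset.range (s + 1), w i =
          (s : ℚ) * (s + 1) / (2 * d) + (s : ℚ) * (s + 1) / (d * ((p : ℚ) - 1))) ∧
      (d ≤ 2 * s →
        ∑ i ∈ Finset.range (s + 1), w i =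
          (s : ℚ) * (s + 1) / (2 * d) +
            ((d : ℚ) - s) * ((d : ℚ) - s - 1) / (d * ((p : ℚ) - 1))) ∧
      ∑ i ∈ Finset.range (s + 1), w i ≤
        (s : ℚ) * (s + 1) / (2 * d) + ((d : ℚ) ^ 2 - 1) / (4 * d * ((p : ℚ) - 1)) := by
  have hp2 : 2 ≤ p := hp.two_le
  have hpq1 : (1:ℚ) < (p:ℚ) := by exact_mod_cast lt_of_lt_of_le one_lt_two hp2
  have hpq : (p:ℚ) - 1 ≠ 0 := by linarith
  have hpq' : (0:ℚ) < (p:ℚ) - 1 := by linarith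
  have hd0 : (0:ℚ) < (d:ℚ) := by exact_mod_cast lt_of_lt_of_le Nat.zero_lt_two hd
  have hdq : (d:ℚ) ≠ 0 := ne_of_gt hd0
  have main : ∀ s : ℕ, s ≤ d - 1 →
      (2 * s ≤ d - 1 →
        ∑ i ∈ Finset.range (s + 1), w i =
          (s : ℚ) * (s + 1) / (2 * d) + (s : ℚ) * (s + 1) / (d * ((p : ℚ) - 1))) ∧
      (d ≤ 2 * s →
        ∑ i ∈ Finset.range (s + 1), w i =
          (s : ℚ) * (s + 1) / (2 * d) +
            ((d : ℚ) - s) * ((d : ℚ) - s - 1) / (d * ((p : ℚ) - 1))) := by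
    intro s
    induction s with
    | zero =>
      intro _
      have h0 : w 0 = 0 := by rw [hw 0, if_pos (by omega)]; simp
      constructor
      · intro _
        simp [Finset.sum_range_one, h0]
      · intro h
        omega
    | succ n ih =>
      intro hn1
      have hn : n ≤ d - 1 := by omega
      obtain ⟨ih1, ih2⟩ := ih hn
      constructor
      · intro h1
        have hwn : w (n + 1) = ((p:ℚ) + 1) * ((n:ℚ)+1) / (d * ((p:ℚ) - 1)) := by
          rw [hw (n+1), if_pos (by omega)]; push_cast; ring
        rw [Finset.sum_range_succ, ih1 (by omega), hwn]
        push_cast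
        field_simp
        ring
      · intro h2
        by_cases hc : d ≤ 2 * n
        · have hwn : w (n + 1) = (((p:ℚ) + 1) * ((n:ℚ)+1) - 2 * d) / (d * ((p:ℚ) - 1)) := by
            rw [hw (n+1), if_neg (by omega), if_neg (by omega)]; push_cast; ring
          rw [Finset.sum_range_succ, ih2 hc, hwn]
          push_cast
          field_simp
          ring
        · -- transition: 2n < d ≤ 2n+2, so d = 2n+1 or d = 2n+2
          have hih := ih1 (by omega)
          by_cases he : d = 2 * n + 2
          · have hwn : w (n + 1) = 1 / 2 := by
              rw [hw (n+1), if_neg (by omega), if_pos (by omega)]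
            have hdq2 : (d:ℚ) = 2 * (n:ℚ) + 2 := by
              rw [he]; push_cast; ring
            rw [Finset.sum_range_succ, hih, hwn, hdq2]
            push_cast
            have h2n : (2 * (n:ℚ) + 2) ≠ 0 := by positivity
            field_simp
            ring
          · have hod : d = 2 * n + 1 := by omega
            have hwn : w (n + 1) = (((p:ℚ) + 1) * ((n:ℚ)+1) - 2 * d) / (d * ((p:ℚ) - 1)) := by
              rw [hw (n+1), if_neg (by omega), if_neg (by omega)]; push_cast; ring
            have hdq2 : (d:ℚ) = 2 * (n:ℚ) + 1 := by
              rw [hod]; push_cast; ring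
            rw [Finset.sum_range_succ, hih, hwn, hdq2]
            push_cast
            have h2n : (2 * (n:ℚ) + 1) ≠ 0 := by positivity
            field_simp
            ring
  have key : ∀ a : ℚ, 4 * a ≤ (d:ℚ)^2 - 1 →
      a / (d * ((p:ℚ) - 1)) ≤ ((d:ℚ) ^ 2 - 1) / (4 * d * ((p : ℚ) - 1)) := by
    intro a ha
    rw [div_le_div_iff₀ (by positivity) (by positivity)]
    have h1 := mul_le_mul_of_nonneg_right ha (le_of_lt (mul_pos hd0 hpq'))
    calc a * (4 * d * ((p:ℚ) - 1)) = (4 * a) * (d * ((p:ℚ) - 1)) := by ring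
      _ ≤ ((d:ℚ)^2 - 1) * (d * ((p:ℚ) - 1)) := h1
  intro s hs
  obtain ⟨m1, m2⟩ := main s hs
  refine ⟨m1, m2, ?_⟩
  rcases le_or_gt (2 * s) (d - 1) with h | h
  · rw [m1 h]
    have hnat : 4 * s * (s + 1) + 1 ≤ d * d := by
      nlinarith [Nat.mul_le_mul (by omega : 2*s+1 ≤ d) (by omega : 2*s+1 ≤ d)]
    have hq : 4 * (s:ℚ) * ((s:ℚ) + 1) + 1 ≤ (d:ℚ) * d := by exact_mod_cast hnat
    have := key ((s:ℚ) * ((s:ℚ) + 1)) (by nlinarith [hq])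
    linarith
  · have hds : d ≤ 2 * s := by omega
    rw [m2 hds]
    obtain ⟨u, hu⟩ : ∃ u, d = s + u + 1 := ⟨d - s - 1, by omega⟩
    have ht2 : 2 * (u + 1) ≤ d := by omega
    have hnat : 4 * (u + 1) * u + 1 ≤ d * d := by nlinarith [Nat.mul_le_mul ht2 ht2]
    have hq : 4 * ((u:ℚ) + 1) * u + 1 ≤ (d:ℚ) * d := by exact_mod_cast hnat
    have hdsu : (d:ℚ) - s = (u:ℚ) + 1 := by rw [hu]; push_cast; ring
    rw [hdsu]
    have := key (((u:ℚ) + 1) * ((u:ℚ) + 1 - 1)) (by nlinarith [hq])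
    linarith
end

section
/- Let NP(f, x) and HP(f, x) be piecewise linear convex functions on [0, ∞) such that NP(f, x) ≥ HP(f, x) for all x, HP has vertices (n, n(n-1)/(2d)) for n = 0, 1, 2, …, the slopes of NP on successive unit intervals are {i + w_j : i ≥ 0, 0 ≤ j ≤ d-1} in increasing order, and Σ_{j=0}^{d-1} w_j = Σ_{j=0}^{d-1} j/d with 0 ≤ w_0 < ⋯ < w_{d-1} < 1. Then NP(f, x) - HP(f, x) is periodic with period d, and its maximum is attained at some integer point 0 ≤ x ≤ d. -/
/-- `NP(f,·) - HP(f,·)` is periodic with period `d` and attains its maximum at an integer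
point in `[0, d]`. Here `NP(f,·)` is the piecewise linear function with `NP(f,0) = 0` whose
slope on `[n, n+1]` is the `(n+1)`-st smallest element of `{i + w_j : i ≥ 0, 0 ≤ j ≤ d-1}`
(namely `⌊n/d⌋ + w_{n mod d}`, since `0 ≤ w_0 < ⋯ < w_{d-1} < 1`), and `HP(f,·)` is the
piecewise linear function with `HP(f,n) = n(n-1)/(2d)` at integers `n`. -/
theorem stmt_19 (d : ℕ) (hd : 2 ≤ d) (w : ℕ → ℚ)
    (hw0 : 0 ≤ w 0)
    (hmono : ∀ i j : ℕ, i < j → j ≤ d - 1 → w i < w j)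
    (hlt : ∀ i : ℕ, i ≤ d - 1 → w i < 1)
    (hsum : ∑ j ∈ Finset.range d, w j = ∑ j ∈ Finset.range d, (j : ℚ) / d)
    (slope : ℕ → ℚ) (hslope : ∀ n : ℕ, slope n = (n / d : ℕ) + w (n % d))
    (N : ℕ → ℚ) (hN : ∀ n : ℕ, N n = ∑ m ∈ Finset.range n, slope m)
    (H : ℕ → ℚ) (hH : ∀ n : ℕ, H n = (n : ℚ) * ((n : ℚ) - 1) / (2 * d))
    (NP : ℝ → ℝ)
    (hNP : ∀ x : ℝ, 0 ≤ x →
      NP x = (N ⌊x⌋.toNat : ℚ) + (x - ⌊x⌋) * ((slope ⌊x⌋.toNat : ℚ) : ℝ))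
    (HP : ℝ → ℝ)
    (hHP : ∀ x : ℝ, 0 ≤ x →
      HP x = (H ⌊x⌋.toNat : ℚ) + (x - ⌊x⌋) * ((H (⌊x⌋.toNat + 1) - H ⌊x⌋.toNat : ℚ) : ℝ)) :
    (∀ x : ℝ, 0 ≤ x → NP (x + d) - HP (x + d) = NP x - HP x) ∧
    ∃ n : ℕ, n ≤ d ∧ ∀ x : ℝ, 0 ≤ x → NP x - HP x ≤ NP n - HP n := by
  have hdpos : 0 < d := by omega
  have hd0 : (d : ℚ) ≠ 0 := by exact_mod_cast hdpos.ne'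
  set g : ℕ → ℚ := fun m => slope m - m / d with hg
  set Dq : ℕ → ℚ := fun n => N n - H n with hDqdef
  have hHstep : ∀ n : ℕ, H (n + 1) - H n = n / d := by
    intro n
    rw [hH, hH]
    push_cast
    field_simp
    ring
  have hgper : ∀ m : ℕ, g (m + d) = g m := by
    intro m
    simp only [hg]
    rw [hslope, hslope, Nat.add_div_right _ hdpos, Nat.add_mod_right]
    push_cast
    field_simp
    ring
  have hDstep : ∀ n : ℕ, Dq (n + 1) = Dq n + g n := by
    intro n
    simp only [hDqdef, hg]
    rw [hN, hN, Finset.sum_range_succ]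
    have := hHstep n
    linarith
  have hDq0 : Dq 0 = 0 := by simp [hDqdef, hN, hH]
  have hDsum : ∀ n : ℕ, Dq n = ∑ m ∈ Finset.range n, g m := by
    intro n
    induction n with
    | zero => simpa using hDq0
    | succ k ih => rw [hDstep, ih, Finset.sum_range_succ]
  have hsum_g : ∑ m ∈ Finset.range d, g m = 0 := by
    have hc : ∀ m ∈ Finset.range d, g m = w m - m / d := by
      intro m hm
      have hm' := Finset.mem_range.mp hm
      simp only [hg]
      rw [hslope, Nat.div_eq_of_lt hm', Nat.mod_eq_of_lt hm']
      push_cast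
      ring
    rw [Finset.sum_congr rfl hc, Finset.sum_sub_distrib, hsum, sub_self]
  have hDper : ∀ n : ℕ, Dq (n + d) = Dq n := by
    intro n
    induction n with
    | zero => rw [zero_add, hDsum d, hsum_g, hDq0]
    | succ k ih =>
      have h1 : k + 1 + d = k + d + 1 := by omega
      rw [h1, hDstep, ih, hgper, ← hDstep]
  have hkd : ∀ k m : ℕ, Dq (m + k * d) = Dq m := by
    intro k
    induction k with
    | zero => intro m; simp
    | succ j ih =>
      intro m
      have h1 : m + (j + 1) * d = (m + j * d) + d := by ring
      rw [h1, hDper, ih]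
  have hDmod : ∀ n : ℕ, Dq n = Dq (n % d) := by
    intro n
    conv_lhs => rw [← Nat.mod_add_div' n d]
    exact hkd _ _
  obtain ⟨n₀, hn₀mem, hmax⟩ : ∃ n₀ ∈ Finset.range (d + 1),
      ∀ m ∈ Finset.range (d + 1), Dq m ≤ Dq n₀ :=
    Finset.exists_max_image _ Dq ⟨0, by simp⟩
  have hDle : ∀ n : ℕ, Dq n ≤ Dq n₀ := by
    intro n
    rw [hDmod n]
    exact hmax _ (Finset.mem_range.mpr (by have := Nat.mod_lt n hdpos; omega))
  have hform : ∀ x : ℝ, 0 ≤ x →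
      NP x - HP x = ((Dq ⌊x⌋.toNat : ℚ) : ℝ) + (x - ⌊x⌋) * ((g ⌊x⌋.toNat : ℚ) : ℝ) := by
    intro x hx
    rw [hNP x hx, hHP x hx, hHstep ⌊x⌋.toNat]
    simp only [hDqdef, hg]
    push_cast
    ring
  have hint : ∀ n : ℕ, NP n - HP n = ((Dq n : ℚ) : ℝ) := by
    intro n
    rw [hform n (Nat.cast_nonneg n)]
    simp
  constructor
  · intro x hx
    have hxd : (0 : ℝ) ≤ x + d := add_nonneg hx (Nat.cast_nonneg d)
    have hfl : ⌊x + (d : ℝ)⌋ = ⌊x⌋ + d := Int.floor_add_natCast x d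
    have hfl0 : 0 ≤ ⌊x⌋ := Int.floor_nonneg.mpr hx
    have htn : (⌊x⌋ + (d : ℤ)).toNat = ⌊x⌋.toNat + d := by omega
    rw [hform (x + d) hxd, hform x hx, hfl, htn, hDper, hgper]
    push_cast
    ring
  · refine ⟨n₀, by have := Finset.mem_range.mp hn₀mem; omega, ?_⟩
    intro x hx
    rw [hform x hx, hint n₀]
    set n := ⌊x⌋.toNat with hn
    set t : ℝ := x - ⌊x⌋ with htdef
    have ht0 : 0 ≤ t := sub_nonneg.mpr (Int.floor_le x)
    have ht1 : t ≤ 1 := by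
      have := Int.lt_floor_add_one x
      simp only [htdef]
      push_cast at this ⊢
      linarith
    have h1 : ((Dq n : ℚ) : ℝ) ≤ ((Dq n₀ : ℚ) : ℝ) := by exact_mod_cast hDle n
    rcases le_or_gt (g n) 0 with hgle | hgt
    · have h2 : ((g n : ℚ) : ℝ) ≤ 0 := by exact_mod_cast hgle
      have h3 : t * ((g n : ℚ) : ℝ) ≤ 0 := mul_nonpos_of_nonneg_of_nonpos ht0 h2
      linarith
    · have h2 : (0 : ℝ) < ((g n : ℚ) : ℝ) := by exact_mod_cast hgt
      have h3 : t * ((g n : ℚ) : ℝ) ≤ ((g n : ℚ) : ℝ) :=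
        mul_le_of_le_one_left h2.le ht1
      have h4 : ((Dq (n + 1) : ℚ) : ℝ) ≤ ((Dq n₀ : ℚ) : ℝ) := by exact_mod_cast hDle (n + 1)
      have h5 : ((Dq (n + 1) : ℚ) : ℝ) = ((Dq n : ℚ) : ℝ) + ((g n : ℚ) : ℝ) := by
        exact_mod_cast congrArg (fun q : ℚ => (q : ℝ)) (hDstep n)
      linarith
end
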